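/- Let p be a prime, ℓ ≥ 1, d = p^ℓ, and let K be an algebraically closed field of characteristic p. Then for any α, β ∈ K, the set C(α;β) = {λ ∈ K : f_λ^m(α) = β for some positive integer m} is infinite, where f_λ(z) = z^d + λ. -/

import Mathlib

open Polynomial Finset

lemma iter_formula (K : Type*) [Field K] (p ℓ : ℕ) [Fact p.Prime] [CharP K p]
    (lam α : K) (m : ℕ) :
    (fun z : K => z ^ (p ^ ℓ) + lam)^[m] α
      = α ^ ((p ^ ℓ) ^ m) + ∑ i ∈ Finset.range m, lam ^ ((p ^ ℓ) ^ i) := by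
  induction m with
  | zero => simp
  | succ m ih =>
      rw [Function.iterate_succ_apply', ih]
      rw [add_pow_char_pow, ← pow_mul, ← pow_succ]
      have hsum : (∑ i ∈ Finset.range m, lam ^ ((p ^ ℓ) ^ i)) ^ p ^ ℓ
          = ∑ i ∈ Finset.range m, lam ^ ((p ^ ℓ) ^ (i + 1)) := by
        rw [← iterateFrobenius_def, map_sum]
        congr 1; ext i
        rw [iterateFrobenius_def, ← pow_mul, ← pow_succ]
      rw [hsum, Finset.sum_range_succ']
      simp only [pow_zero, pow_one]
      ring

theorem C_alpha_beta_infinite_power_of_p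
    (K : Type*) [Field K] [IsAlgClosed K] (p ℓ : ℕ) (hp : p.Prime) [CharP K p]
    (hℓ : 1 ≤ ℓ) (α β : K) :
    {lam : K | ∃ m : ℕ, 1 ≤ m ∧ (fun z : K => z ^ (p ^ ℓ) + lam)^[m] α = β}.Infinite := by
  haveI : Fact p.Prime := ⟨hp⟩
  set S := {lam : K | ∃ m : ℕ, 1 ≤ m ∧ (fun z : K => z ^ (p ^ ℓ) + lam)^[m] α = β} with hS
  by_contra hinf
  rw [Set.not_infinite] at hinf
  set D := p ^ ℓ with hD
  have hD2 : 2 ≤ D := by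
    calc 2 ≤ p := hp.two_le
    _ = p ^ 1 := (pow_one p).symm
    _ ≤ p ^ ℓ := Nat.pow_le_pow_right hp.pos hℓ
  set n := S.ncard with hn
  set k := n + 1 with hk
  have hnk : n < D ^ k := by
    calc n < 2 ^ n := Nat.lt_two_pow_self
    _ ≤ 2 ^ k := Nat.pow_le_pow_right (by norm_num) (by omega)
    _ ≤ D ^ k := Nat.pow_le_pow_left hD2 k
  -- the polynomial
  set c : K := α ^ (D ^ (k + 1)) - β with hc
  set P : Polynomial K := (∑ i ∈ Finset.range (k + 1), Polynomial.X ^ (D ^ i)) + Polynomial.C c with hP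
  have heval : ∀ lam : K, P.eval lam = (fun z : K => z ^ (p ^ ℓ) + lam)^[k+1] α - β := by
    intro lam
    rw [iter_formula K p ℓ lam α (k+1)]
    simp [hP, Polynomial.eval_finset_sum, hc]
    ring
  -- degree
  have hdeg : P.degree = (D ^ k : ℕ) := by
    have hrw : P = Polynomial.X ^ (D ^ k) +
        ((∑ i ∈ Finset.range k, Polynomial.X ^ (D ^ i)) + Polynomial.C c) := by
      rw [hP, Finset.sum_range_succ]; ring
    have hQdeg : ((∑ i ∈ Finset.range k, (Polynomial.X : Polynomial K) ^ (D ^ i)) + Polynomial.C c).natDegree ≤ D ^ k - 1 := by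
      apply le_trans (Polynomial.natDegree_add_le _ _)
      simp only [Polynomial.natDegree_C, max_le_iff]
      constructor
      · apply Polynomial.natDegree_sum_le_of_forall_le
        intro i hi
        rw [Polynomial.natDegree_X_pow]
        have : D ^ i < D ^ k := Nat.pow_lt_pow_right hD2 (Finset.mem_range.mp hi)
        omega
      · omega
    rw [hrw, Polynomial.degree_add_eq_left_of_degree_lt, Polynomial.degree_X_pow]
    rw [Polynomial.degree_X_pow]
    apply lt_of_le_of_lt Polynomial.degree_le_natDegree
    have h1 : 1 ≤ D ^ k := Nat.one_le_pow _ _ (by omega)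
    exact_mod_cast Nat.lt_of_le_of_lt hQdeg (by omega)
  have hnatdeg : P.natDegree = D ^ k := Polynomial.natDegree_eq_of_degree_eq_some hdeg
  -- derivative
  have hderiv : Polynomial.derivative P = 1 := by
    rw [hP, Finset.sum_range_succ']
    simp only [map_add, Polynomial.derivative_C, add_zero, Polynomial.derivative_sum,
      Polynomial.derivative_X_pow]
    have h0 : ∀ i ∈ Finset.range k,
        (Polynomial.C ((D ^ (i+1) : ℕ) : K)) * (Polynomial.X : Polynomial K) ^ (D ^ (i+1) - 1) = 0 := by
      intro i _
      have : ((D ^ (i+1) : ℕ) : K) = 0 := by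
        rw [hD, ← pow_mul]
        rw [Nat.cast_pow, CharP.cast_eq_zero K p]
        exact zero_pow (by positivity)
      rw [this]; simp
    rw [Finset.sum_congr rfl h0]
    simp
  have hsep : P.Separable := by
    rw [Polynomial.Separable, hderiv]
    exact isCoprime_one_right
  have hsplits : (P.map (algebraMap K K)).Splits := IsAlgClosed.splits _
  have hcard : Fintype.card (P.rootSet K) = D ^ k := by
    rw [Polynomial.card_rootSet_eq_natDegree hsep hsplits, hnatdeg]
  have hsub : P.rootSet K ⊆ S := by
    intro lam hlam
    rw [Polynomial.mem_rootSet] at hlam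
    have h0 : P.eval lam = 0 := by
      simpa [Polynomial.aeval_def, Polynomial.eval₂_eq_eval_map, Algebra.algebraMap_self] using hlam.2
    rw [heval] at h0
    exact ⟨k + 1, by omega, by rw [sub_eq_zero] at h0; exact h0⟩
  have : D ^ k ≤ n := by
    calc D ^ k = (P.rootSet K).ncard := by
          rw [← Nat.card_coe_set_eq, Nat.card_eq_fintype_card, hcard]
      _ ≤ S.ncard := Set.ncard_le_ncard hsub hinf
  omega
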